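/- Let 0 < ε < 1/2 and α > 1/ε. Define x = 1_{[0,1]²} + 1_{[α,α+1]²} ∈ L²(ℝ²) and the deformation τ(u) = ε u, so that x_τ(u) = x(u − τ(u)) = x((1−ε)u). Then ‖x − x_τ‖_{L²(ℝ²)} ≥ 1. In particular, since ‖∇τ‖_∞ = ε can be made arbitrarily small while ‖x − x_τ‖ ≥ 1 and ‖x‖² = 2, the identity representation (and any registration invariant built from it) does not satisfy the Lipschitz deformation-stability bound ‖Φ(x) − Φ(x_τ)‖ ≤ C ‖∇τ‖_∞ ‖x‖ uniformly over such x and τ. -/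

import Mathlib

open MeasureTheory Real

noncomputable section

theorem registration_invariant_unstable
    (ε α : ℝ) (hε0 : 0 < ε) (hε : ε < 1/2) (hα : α > 1/ε)
    (x : ℝ × ℝ → ℝ)
    (hx : x = fun u =>
      Set.indicator ((Set.Icc (0:ℝ) 1) ×ˢ (Set.Icc (0:ℝ) 1)) (fun _ => (1:ℝ)) u +
      Set.indicator ((Set.Icc α (α+1)) ×ˢ (Set.Icc α (α+1))) (fun _ => (1:ℝ)) u) :
    (∫ u : ℝ × ℝ, (x u) ^ 2) = 2 ∧
    1 ≤ Real.sqrt (∫ u : ℝ × ℝ, (x u - x ((1 - ε) • u)) ^ 2) := by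
  set A : Set (ℝ × ℝ) := (Set.Icc (0:ℝ) 1) ×ˢ (Set.Icc (0:ℝ) 1) with hAdef
  set B : Set (ℝ × ℝ) := (Set.Icc α (α+1)) ×ˢ (Set.Icc α (α+1)) with hBdef
  have hε1 : ε < 1 := by linarith
  have h2α : 2 < α := by
    have : (2:ℝ) < 1/ε := by
      rw [lt_div_iff₀ hε0]; linarith
    linarith
  have hA : MeasurableSet A := (measurableSet_Icc).prod measurableSet_Icc
  have hB : MeasurableSet B := (measurableSet_Icc).prod measurableSet_Icc
  have hvolA : volume A = 1 := by
    rw [hAdef, Measure.volume_eq_prod, Measure.prod_prod, Real.volume_Icc]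
    norm_num
  have hvolB : volume B = 1 := by
    rw [hBdef, Measure.volume_eq_prod, Measure.prod_prod, Real.volume_Icc]
    norm_num
  have hdisj : ∀ u : ℝ × ℝ, u ∈ A → u ∈ B → False := by
    intro u hu hv
    have h1 : u.1 ≤ 1 := hu.1.2
    have h2 : α ≤ u.1 := hv.1.1
    linarith
  -- pointwise: x u ^ 2 = 1_A u + 1_B u
  have hxsq : ∀ u : ℝ × ℝ, (x u) ^ 2 =
      A.indicator (fun _ => (1:ℝ)) u + B.indicator (fun _ => (1:ℝ)) u := by
    intro u
    rw [hx]
    by_cases hu : u ∈ A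
    · have hv : u ∉ B := fun hv => hdisj u hu hv
      simp [Set.indicator_of_mem, hu, Set.indicator_of_notMem, hv]
    · by_cases hv : u ∈ B
      · simp [Set.indicator_of_mem, hv, Set.indicator_of_notMem, hu]
      · simp [Set.indicator_of_notMem, hu, hv]
  have hintA : Integrable (A.indicator (fun _ => (1:ℝ))) := by
    rw [integrable_indicator_iff hA]
    exact integrableOn_const (by rw [hvolA]; exact ENNReal.one_ne_top)
  have hintB : Integrable (B.indicator (fun _ => (1:ℝ))) := by
    rw [integrable_indicator_iff hB]
    exact integrableOn_const (by rw [hvolB]; exact ENNReal.one_ne_top)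
  have hintAB : Integrable (fun u : ℝ × ℝ =>
      A.indicator (fun _ => (1:ℝ)) u + B.indicator (fun _ => (1:ℝ)) u) :=
    hintA.add hintB
  have hintxsq : Integrable (fun u : ℝ × ℝ => (x u) ^ 2) := by
    have : (fun u : ℝ × ℝ => (x u) ^ 2) = fun u =>
        A.indicator (fun _ => (1:ℝ)) u + B.indicator (fun _ => (1:ℝ)) u :=
      funext hxsq
    rw [this]; exact hintAB
  have hIA : (∫ u : ℝ × ℝ, A.indicator (fun _ => (1:ℝ)) u) = 1 := by
    rw [integral_indicator hA]
    simp [measureReal_def, hvolA]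
  have hIB : (∫ u : ℝ × ℝ, B.indicator (fun _ => (1:ℝ)) u) = 1 := by
    rw [integral_indicator hB]
    simp [measureReal_def, hvolB]
  have part1 : (∫ u : ℝ × ℝ, (x u) ^ 2) = 2 := by
    calc (∫ u : ℝ × ℝ, (x u) ^ 2)
        = ∫ u : ℝ × ℝ, (A.indicator (fun _ => (1:ℝ)) u + B.indicator (fun _ => (1:ℝ)) u) := by
          exact integral_congr_ae (Filter.Eventually.of_forall hxsq)
      _ = (∫ u : ℝ × ℝ, A.indicator (fun _ => (1:ℝ)) u) +
          (∫ u : ℝ × ℝ, B.indicator (fun _ => (1:ℝ)) u) := integral_add hintA hintB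
      _ = 2 := by rw [hIA, hIB]; norm_num
  refine ⟨part1, ?_⟩
  -- measurability of x
  have hxm : Measurable x := by
    rw [hx]
    exact ((measurable_const.indicator hA).add (measurable_const.indicator hB))
  have hc : (1 - ε) ≠ 0 := by linarith
  have hxcm : Measurable (fun u : ℝ × ℝ => x ((1 - ε) • u)) :=
    hxm.comp (measurable_const_smul _)
  have hintxc : Integrable (fun u : ℝ × ℝ => (x ((1 - ε) • u)) ^ 2) := by
    have := (integrable_comp_smul_iff (volume : Measure (ℝ × ℝ))
      (fun u => (x u) ^ 2) hc).2 hintxsq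
    exact this
  have hfm : Measurable (fun u : ℝ × ℝ => (x u - x ((1 - ε) • u)) ^ 2) :=
    (hxm.sub hxcm).pow_const 2
  have hintf : Integrable (fun u : ℝ × ℝ => (x u - x ((1 - ε) • u)) ^ 2) := by
    apply Integrable.mono' ((hintxsq.add hintxc).const_mul 2) hfm.aestronglyMeasurable
    filter_upwards with u
    have h1 : (x u - x ((1 - ε) • u)) ^ 2 ≤ 2 * ((x u) ^ 2 + (x ((1 - ε) • u)) ^ 2) := by
      nlinarith [sq_nonneg (x u + x ((1 - ε) • u))]
    have h2 : (0:ℝ) ≤ (x u - x ((1 - ε) • u)) ^ 2 := sq_nonneg _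
    rw [Real.norm_eq_abs, abs_of_nonneg h2]
    exact h1
  -- pointwise lower bound
  have hlb : ∀ u : ℝ × ℝ, B.indicator (fun _ => (1:ℝ)) u ≤ (x u - x ((1 - ε) • u)) ^ 2 := by
    intro u
    by_cases hv : u ∈ B
    · have hu1 : α ≤ u.1 := hv.1.1
      have hu1' : u.1 ≤ α + 1 := hv.1.2
      have hu2 : α ≤ u.2 := hv.2.1
      have hu2' : u.2 ≤ α + 1 := hv.2.2
      have hxu : x u = 1 := by
        have huA : u ∉ A := fun h => hdisj u h hv
        rw [hx]
        simp [Set.indicator_of_mem, hv, Set.indicator_of_notMem, huA]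
      have key1 : ∀ t : ℝ, α ≤ t → t ≤ α + 1 → 1 < (1 - ε) * t := by
        intro t h1 h2
        have hεα : 1 < ε * α := by
          rw [gt_iff_lt, div_lt_iff₀ hε0] at hα
          linarith [mul_comm α ε]
        nlinarith
      have key2 : ∀ t : ℝ, α ≤ t → t ≤ α + 1 → (1 - ε) * t < α := by
        intro t h1 h2
        have hεα : 1 < ε * α := by
          rw [gt_iff_lt, div_lt_iff₀ hε0] at hα
          linarith [mul_comm α ε]
        nlinarith
      have hsm : (1 - ε) • u = ((1 - ε) * u.1, (1 - ε) * u.2) := rfl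
      have hnA : (1 - ε) • u ∉ A := by
        rw [hsm]
        intro h
        have : ((1 - ε) * u.1) ≤ 1 := h.1.2
        have := key1 u.1 hu1 hu1'
        linarith
      have hnB : (1 - ε) • u ∉ B := by
        rw [hsm]
        intro h
        have : α ≤ ((1 - ε) * u.1) := h.1.1
        have := key2 u.1 hu1 hu1'
        linarith
      have hxc : x ((1 - ε) • u) = 0 := by
        rw [hx]
        simp [Set.indicator_of_notMem, hnA, hnB]
      rw [Set.indicator_of_mem hv, hxu, hxc]
      norm_num
    · rw [Set.indicator_of_notMem hv]
      exact sq_nonneg _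
  have hI : (1:ℝ) ≤ ∫ u : ℝ × ℝ, (x u - x ((1 - ε) • u)) ^ 2 := by
    calc (1:ℝ) = ∫ u : ℝ × ℝ, B.indicator (fun _ => (1:ℝ)) u := hIB.symm
      _ ≤ ∫ u : ℝ × ℝ, (x u - x ((1 - ε) • u)) ^ 2 := integral_mono hintB hintf hlb
  calc (1:ℝ) = Real.sqrt 1 := Real.sqrt_one.symm
    _ ≤ Real.sqrt (∫ u : ℝ × ℝ, (x u - x ((1 - ε) • u)) ^ 2) := Real.sqrt_le_sqrt hI
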